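/- Let α, γ, δ, q, ε ∈ ℂ with ε ≠ 0 and γ+n−1 ≠ 0, γ+n ≠ 0 for all n ≥ 0. Define coefficients a_n by the three-term recurrence R_n a_n + Q_{n−1} a_{n−1} + P_{n−2} a_{n−2} = 0 with a_0 = 1, a_{−1} = a_{−2} = 0, where R_n = −n(γ+n−1), Q_n = n(γ+n−1) − q, P_n = −δ(α+εn)/(γ+n). If the formal series u(z) = Σ_{n=0}^{∞} a_n · ₁F₁(α/ε + n; γ+n; −εz) converges suitably (e.g., termwise as a formal manipulation), then plugging it into the operator L[u] = z²u'' + (εz² + γz + δ)u' + (αz − q)u yields zero; equivalently, the formal sum Σ_n a_n · L[u_n] vanishes where u_n = ₁F₁(α/ε+n; γ+n; −εz). -/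

import Mathlib

open PowerSeries

/-- Pochhammer symbol `(a)_k = a (a+1) ⋯ (a+k−1)` in `ℂ`. -/
noncomputable def poch (a : ℂ) (k : ℕ) : ℂ := (ascPochhammer ℂ k).eval a

/-- Kummer confluent hypergeometric series `₁F₁(a;b;sz)` as a formal power series in `z`. -/
noncomputable def F1 (a b s : ℂ) : PowerSeries ℂ :=
  PowerSeries.mk fun k => poch a k / poch b k * s ^ k / (k.factorial : ℂ)

/-- Formal derivative of a power series. -/
noncomputable def D (f : PowerSeries ℂ) : PowerSeries ℂ := f.derivativeFun

/-- The double-confluent Heun operator multiplied by `z²`. -/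
noncomputable def L (α γ δ q ε : ℂ) (f : PowerSeries ℂ) : PowerSeries ℂ :=
  (X : PowerSeries ℂ) ^ 2 * D (D f)
    + (PowerSeries.C ε * X ^ 2 + PowerSeries.C γ * X + PowerSeries.C δ) * D f
    + (PowerSeries.C α * X - PowerSeries.C q) * f

lemma poch_zero (a : ℂ) : poch a 0 = 1 := by simp [poch]

lemma poch_succ (a : ℂ) (k : ℕ) : poch a (k+1) = poch a k * (a + k) := by
  simp [poch, ascPochhammer_succ_right]

lemma poch_succ_left (a : ℂ) (k : ℕ) : poch a (k+1) = a * poch (a+1) k := by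
  simp [poch, ascPochhammer_succ_left, Polynomial.eval_comp]

lemma poch_one (a : ℂ) : poch a 1 = a := by
  rw [show (1:ℕ) = 0+1 from rfl, poch_succ, poch_zero]; simp

lemma pochγ_ne (γ : ℂ) (hγ : ∀ n : ℕ, γ + n - 1 ≠ 0 ∧ γ + n ≠ 0) (n k : ℕ) :
    poch (γ + n) k ≠ 0 := by
  induction k with
  | zero => simp [poch_zero]
  | succ k ih =>
    rw [poch_succ]
    refine mul_ne_zero ih ?_
    have h := (hγ (n+k)).2
    push_cast at h
    rwa [add_assoc]

lemma L_decomp (α γ δ q ε : ℂ) (f : PowerSeries ℂ) :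
    L α γ δ q ε f = X^2 * D (D f) + PowerSeries.C ε * (X^2 * D f)
      + PowerSeries.C γ * (X * D f) + PowerSeries.C δ * D f
      + PowerSeries.C α * (X * f) - PowerSeries.C q * f := by
  unfold L; ring

lemma coeff_D (f : PowerSeries ℂ) (k : ℕ) :
    coeff k (D f) = coeff (k+1) f * (k+1) := by
  exact coeff_derivative f k

lemma coeff_L_zero (α γ δ q ε : ℂ) (f : PowerSeries ℂ) :
    coeff 0 (L α γ δ q ε f) = δ * coeff 1 f - q * coeff 0 f := by
  rw [L_decomp]
  simp only [map_add, map_sub, coeff_C_mul, pow_two, mul_assoc]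
  simp [coeff_zero_X_mul, coeff_D]

lemma coeff_L_succ (α γ δ q ε : ℂ) (f : PowerSeries ℂ) (j : ℕ) :
    coeff (j+1) (L α γ δ q ε f) =
      (j:ℂ)*((j:ℂ)+1) * coeff (j+1) f
      + ε*(j:ℂ) * coeff j f
      + γ*((j:ℂ)+1) * coeff (j+1) f
      + δ*((j:ℂ)+2) * coeff (j+2) f
      + α * coeff j f
      - q * coeff (j+1) f := by
  have hXX : ∀ g : PowerSeries ℂ, coeff (j+1) (X^2 * g)
      = (if 1 ≤ j then coeff (j-1) g else 0) := by
    intro g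
    cases j with
    | zero => simp [pow_two, mul_assoc]
    | succ i =>
      simp only [show i+1+1 = i+2 from rfl, Nat.add_sub_cancel, if_pos (Nat.le_add_left 1 i)]
      simpa using coeff_X_pow_mul g 2 i
  rw [L_decomp]
  simp only [map_add, map_sub, coeff_C_mul, hXX, coeff_succ_X_mul, coeff_D]
  cases j with
  | zero => simp; ring
  | succ i =>
    rw [if_pos (Nat.le_add_left 1 i), if_pos (Nat.le_add_left 1 i)]
    simp only [Nat.add_sub_cancel]
    push_cast
    rw [show i+1+1+1 = i+3 from rfl, show i+1+1 = i+2 from rfl]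
    ring

set_option maxHeartbeats 1000000 in
lemma key (α γ δ q ε : ℂ) (hε : ε ≠ 0)
    (hγ : ∀ n : ℕ, γ + n - 1 ≠ 0 ∧ γ + n ≠ 0)
    (R Q P : ℕ → ℂ)
    (hR : ∀ n : ℕ, R n = -(n : ℂ) * (γ + n - 1))
    (hQ : ∀ n : ℕ, Q n = (n : ℂ) * (γ + n - 1) - q)
    (hP : ∀ n : ℕ, P n = -δ * (α + ε * n) / (γ + n)) (n : ℕ) :
    L α γ δ q ε (F1 (α/ε + n) (γ + n) (-ε))
      = PowerSeries.C (R n) * F1 (α/ε + ((n-1 : ℕ):ℂ)) (γ + ((n-1:ℕ):ℂ)) (-ε)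
      + PowerSeries.C (Q n) * F1 (α/ε + n) (γ + n) (-ε)
      + PowerSeries.C (P n) * F1 (α/ε + ((n+1:ℕ):ℂ)) (γ + ((n+1:ℕ):ℂ)) (-ε) := by
  have hb : γ + (n:ℂ) ≠ 0 := (hγ n).2
  ext k
  simp only [map_add, coeff_C_mul]
  cases k with
  | zero =>
    rw [coeff_L_zero]
    simp only [F1, coeff_mk, pow_zero, pow_one, Nat.factorial_zero, Nat.factorial_one,
      poch_zero, poch_one, Nat.cast_one]
    rw [hR n, hQ n, hP n]
    field_simp
    ring
  | succ j =>
    rw [coeff_L_succ]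
    simp only [F1, coeff_mk]
    have hA1 : poch (α/ε + (n:ℂ)) (j+1) = poch (α/ε + n) j * (α/ε + n + j) := poch_succ _ _
    have hB1 : poch (γ + (n:ℂ)) (j+1) = poch (γ + n) j * (γ + n + j) := poch_succ _ _
    have e1 : poch (α/ε + (n:ℂ)) (j+2) = (α/ε + n) * poch (α/ε + ((n+1:ℕ):ℂ)) (j+1) := by
      rw [show j+2 = (j+1)+1 from rfl, poch_succ_left]
      congr 2
      push_cast; ring
    have e2 : poch (γ + (n:ℂ)) (j+2) = (γ + n) * poch (γ + ((n+1:ℕ):ℂ)) (j+1) := by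
      rw [show j+2 = (j+1)+1 from rfl, poch_succ_left]
      congr 2
      push_cast; ring
    have hαε : α + ε * (n:ℂ) = ε * (α/ε + n) := by field_simp
    have f1 : (((j+1).factorial : ℕ) : ℂ) = ((j:ℂ)+1) * (j.factorial : ℂ) := by
      rw [Nat.factorial_succ]; push_cast; ring
    have f2 : (((j+2).factorial : ℕ) : ℂ) = ((j:ℂ)+2) * (((j+1).factorial : ℕ) : ℂ) := by
      rw [show j+2 = (j+1)+1 from rfl, Nat.factorial_succ]; push_cast; ring
    have hB0 : poch (γ + (n:ℂ)) j ≠ 0 := pochγ_ne γ hγ n j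
    have hbj : γ + (n:ℂ) + j ≠ 0 := by
      have e : γ + (n:ℂ) + j = γ + ((n+j : ℕ):ℂ) := by push_cast; ring
      rw [e]; exact (hγ (n+j)).2
    have hfac : (j.factorial : ℂ) ≠ 0 := Nat.cast_ne_zero.mpr j.factorial_ne_zero
    have hfac1 : (((j+1).factorial : ℕ) : ℂ) ≠ 0 := Nat.cast_ne_zero.mpr (j+1).factorial_ne_zero
    have hj1 : ((j:ℂ)+1) ≠ 0 := by
      have := Nat.cast_add_one_ne_zero (R := ℂ) j; exact_mod_cast this
    have hj2 : ((j:ℂ)+2) ≠ 0 := by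
      intro h
      have h2 : (((j+2:ℕ)):ℂ) = 0 := by push_cast; exact h
      exact (by omega : j+2 ≠ 0) (Nat.cast_eq_zero.mp h2)
    have hb1 : γ + (n:ℂ) - 1 ≠ 0 := (hγ n).1
    have hYne : poch (γ + ((n+1:ℕ):ℂ)) (j+1) ≠ 0 := pochγ_ne γ hγ (n+1) (j+1)
    have hcancel : δ*((j:ℂ)+2) * (poch (α/ε + ((n:ℕ):ℂ)) (j+2) / poch (γ + ((n:ℕ):ℂ)) (j+2)
          * (-ε)^(j+2) / (((j+2).factorial : ℕ) : ℂ))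
        = P n * (poch (α/ε + ((n+1:ℕ):ℂ)) (j+1) / poch (γ + ((n+1:ℕ):ℂ)) (j+1)
          * (-ε)^(j+1) / (((j+1).factorial : ℕ) : ℂ)) := by
      rw [e1, e2, hP n, hαε, f2]
      simp only [show j+2 = (j+1)+1 from rfl, pow_succ]
      generalize poch (α / ε + ((n+1:ℕ):ℂ)) (j+1) = Xv
      generalize hYg : poch (γ + ((n+1:ℕ):ℂ)) (j+1) = Yv at hYne ⊢
      field_simp
    have Grem : (j:ℂ)*((j:ℂ)+1) * (poch (α/ε + ((n:ℕ):ℂ)) (j+1) / poch (γ + ((n:ℕ):ℂ)) (j+1)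
          * (-ε)^(j+1) / (((j+1).factorial : ℕ) : ℂ))
        + ε*(j:ℂ) * (poch (α/ε + ((n:ℕ):ℂ)) j / poch (γ + ((n:ℕ):ℂ)) j
          * (-ε)^j / ((j.factorial : ℕ) : ℂ))
        + γ*((j:ℂ)+1) * (poch (α/ε + ((n:ℕ):ℂ)) (j+1) / poch (γ + ((n:ℕ):ℂ)) (j+1)
          * (-ε)^(j+1) / (((j+1).factorial : ℕ) : ℂ))
        + α * (poch (α/ε + ((n:ℕ):ℂ)) j / poch (γ + ((n:ℕ):ℂ)) j
          * (-ε)^j / ((j.factorial : ℕ) : ℂ))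
        - q * (poch (α/ε + ((n:ℕ):ℂ)) (j+1) / poch (γ + ((n:ℕ):ℂ)) (j+1)
          * (-ε)^(j+1) / (((j+1).factorial : ℕ) : ℂ))
        = R n * (poch (α/ε + ((n-1:ℕ):ℂ)) (j+1) / poch (γ + ((n-1:ℕ):ℂ)) (j+1)
          * (-ε)^(j+1) / (((j+1).factorial : ℕ) : ℂ))
        + Q n * (poch (α/ε + ((n:ℕ):ℂ)) (j+1) / poch (γ + ((n:ℕ):ℂ)) (j+1)
          * (-ε)^(j+1) / (((j+1).factorial : ℕ) : ℂ)) := by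
      rcases n with _ | m
      · have hR0 : R 0 = 0 := by rw [hR 0]; simp
        rw [hR0, hQ 0, hA1, hB1, f1]
        simp only [zero_mul, zero_add, pow_succ]
        generalize poch (α / ε + ((0:ℕ):ℂ)) j = Av
        generalize hBg : poch (γ + ((0:ℕ):ℂ)) j = Bv at hB0 ⊢
        push_cast at hbj hb1 hb ⊢
        simp only [add_zero] at hbj hb1 hb ⊢
        have hT1 : Av * (α / ε + (j:ℂ)) / (Bv * (γ + (j:ℂ))) * ((-ε) ^ j * -ε)
              / (((j:ℂ) + 1) * (j.factorial:ℂ))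
            = -(ε * (Av * (α + ε * (j:ℂ))))
              * ((-ε)^j / (ε * (Bv * (γ + (j:ℂ)) * (((j:ℂ)+1) * (j.factorial:ℂ))))) := by
          field_simp
        have hT0 : Av / Bv * (-ε) ^ j / (j.factorial:ℂ)
            = ε * ((γ + (j:ℂ)) * (((j:ℂ)+1))) * Av
              * ((-ε)^j / (ε * (Bv * (γ + (j:ℂ)) * (((j:ℂ)+1) * (j.factorial:ℂ))))) := by
          field_simp
        rw [hT1, hT0]
        ring
      · have hdA : poch (α/ε + ((m+1-1 : ℕ):ℂ)) (j+1)
            = (α/ε + ((m+1:ℕ):ℂ) - 1) * poch (α/ε + ((m+1:ℕ):ℂ)) j := by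
          rw [Nat.add_sub_cancel, poch_succ_left]
          congr 2 <;> push_cast <;> ring
        have hdB : poch (γ + ((m+1-1 : ℕ):ℂ)) (j+1)
            = (γ + ((m+1:ℕ):ℂ) - 1) * poch (γ + ((m+1:ℕ):ℂ)) j := by
          rw [Nat.add_sub_cancel, poch_succ_left]
          congr 2 <;> push_cast <;> ring
        rw [hdA, hdB, hR (m+1), hQ (m+1), hA1, hB1, f1]
        simp only [pow_succ]
        generalize poch (α / ε + ((m+1:ℕ):ℂ)) j = Av
        generalize hBg : poch (γ + ((m+1:ℕ):ℂ)) j = Bv at hB0 ⊢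
        push_cast at hbj hb1 hb ⊢
        have hT1 : Av * (α / ε + ((m:ℂ) + 1) + (j:ℂ)) / (Bv * (γ + ((m:ℂ) + 1) + (j:ℂ)))
              * ((-ε) ^ j * -ε) / (((j:ℂ) + 1) * (j.factorial:ℂ))
            = -(ε * (Av * (α + ε * (((m:ℂ)+1) + (j:ℂ)))))
              * ((-ε)^j / (ε * (Bv * (γ + ((m:ℂ)+1) + (j:ℂ)) * (((j:ℂ)+1) * (j.factorial:ℂ))))) := by
          field_simp
          ring
        have hT0 : Av / Bv * (-ε) ^ j / (j.factorial:ℂ)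
            = ε * ((γ + ((m:ℂ)+1) + (j:ℂ)) * (((j:ℂ)+1))) * Av
              * ((-ε)^j / (ε * (Bv * (γ + ((m:ℂ)+1) + (j:ℂ)) * (((j:ℂ)+1) * (j.factorial:ℂ))))) := by
          field_simp
        have hTd : -((m:ℂ) + 1) * (γ + ((m:ℂ) + 1) - 1)
              * ((α / ε + ((m:ℂ) + 1) - 1) * Av / ((γ + ((m:ℂ) + 1) - 1) * Bv)
                * ((-ε) ^ j * -ε) / (((j:ℂ) + 1) * (j.factorial:ℂ)))
            = ((m:ℂ)+1) * (α + ε * (m:ℂ)) * Av * (ε * (γ + ((m:ℂ)+1) + (j:ℂ)))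
              * ((-ε)^j / (ε * (Bv * (γ + ((m:ℂ)+1) + (j:ℂ)) * (((j:ℂ)+1) * (j.factorial:ℂ))))) := by
          field_simp
          ring
        rw [hTd, hT1, hT0]
        ring
    linear_combination Grem + hcancel

theorem stmt_8 (α γ δ q ε : ℂ) (hε : ε ≠ 0)
    (hγ : ∀ n : ℕ, γ + n - 1 ≠ 0 ∧ γ + n ≠ 0)
    (R Q P : ℕ → ℂ)
    (hR : ∀ n : ℕ, R n = -(n : ℂ) * (γ + n - 1))
    (hQ : ∀ n : ℕ, Q n = (n : ℂ) * (γ + n - 1) - q)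
    (hP : ∀ n : ℕ, P n = -δ * (α + ε * n) / (γ + n))
    (a : ℕ → ℂ) (ha0 : a 0 = 1)
    (hrec1 : R 1 * a 1 + Q 0 * a 0 = 0)
    (hrec : ∀ n : ℕ, R (n + 2) * a (n + 2) + Q (n + 1) * a (n + 1) + P n * a n = 0) :
    ∀ M : ℕ, 1 ≤ M →
      (∑ n ∈ Finset.range (M + 1),
          PowerSeries.C (a n) * L α γ δ q ε (F1 (α / ε + n) (γ + n) (-ε)))
        = PowerSeries.C (Q M * a M + P (M - 1) * a (M - 1)) * F1 (α / ε + M) (γ + M) (-ε)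
          + PowerSeries.C (P M * a M) * F1 (α / ε + (M + 1 : ℕ)) (γ + (M + 1 : ℕ)) (-ε) := by
  intro M hM
  obtain ⟨m, rfl⟩ : ∃ m, M = m + 1 := ⟨M - 1, (Nat.succ_pred_eq_of_pos hM).symm⟩
  clear hM
  induction m with
  | zero =>
    rw [Finset.sum_range_succ, Finset.sum_range_one,
      key α γ δ q ε hε hγ R Q P hR hQ hP 0, key α γ δ q ε hε hγ R Q P hR hQ hP (0+1)]
    have hR0 : R 0 = 0 := by rw [hR 0]; simp
    have hK : PowerSeries.C (R 1) * PowerSeries.C (a 1)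
        + PowerSeries.C (Q 0) * PowerSeries.C (a 0) = 0 := by
      rw [← map_mul, ← map_mul, ← map_add, hrec1, map_zero]
    rw [hR0]
    simp only [Nat.add_sub_cancel, Nat.zero_sub, zero_add, map_zero, zero_mul]
    simp only [show (1-1:ℕ) = 0 from rfl]
    simp only [map_add, map_mul]
    linear_combination F1 (α / ε + ((0:ℕ):ℂ)) (γ + ((0:ℕ):ℂ)) (-ε) * hK
  | succ m IH =>
    rw [Finset.sum_range_succ, IH, key α γ δ q ε hε hγ R Q P hR hQ hP (m+1+1)]
    have hK : PowerSeries.C (R (m+2)) * PowerSeries.C (a (m+2))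
        + PowerSeries.C (Q (m+1)) * PowerSeries.C (a (m+1))
        + PowerSeries.C (P m) * PowerSeries.C (a m) = 0 := by
      rw [← map_mul, ← map_mul, ← map_mul, ← map_add, ← map_add, hrec m, map_zero]
    simp only [show m+1+1 = m+2 from rfl, Nat.add_sub_cancel,
      show m+2-1 = m+1 by omega]
    simp only [map_add, map_mul]
    linear_combination F1 (α / ε + ((m+1:ℕ):ℂ)) (γ + ((m+1:ℕ):ℂ)) (-ε) * hK
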